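/- Let O be an acyclic ELU ontology and let C = A₁ ⊓ ⋯ ⊓ Aₙ ⊓ ∃r₁.E₁ ⊓ ⋯ ⊓ ∃rₘ.Eₘ and D = ∃r.E be EL concepts such that O ⊨ C ⊑ D and there is no i ≤ m with rᵢ = r and O ⊨ Eᵢ ⊑ E. Then there exists i ≤ n with O ⊨ Aᵢ ⊑ D. -/

import Mathlib

namespace DL

/- Basic description-logic framework: concepts, interpretations, ontologies. -/

inductive Concept (Cn R : Type) : Type where
  | top  : Concept Cn R
  | bot  : Concept Cn R
  | name : Cn → Concept Cn R
  | neg  : Concept Cn R → Concept Cn R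
  | conj : Concept Cn R → Concept Cn R → Concept Cn R
  | disj : Concept Cn R → Concept Cn R → Concept Cn R
  | ex   : R → Concept Cn R → Concept Cn R
  | all  : R → Concept Cn R → Concept Cn R
  deriving DecidableEq

namespace Concept
variable {Cn R : Type}

/-- `EL` concepts: only ⊤, concept names, ⊓ and ∃r.C. -/
def isEL : Concept Cn R → Prop
  | top => True
  | bot => False
  | name _ => True
  | neg _ => False
  | conj c d => c.isEL ∧ d.isEL
  | disj _ _ => False
  | ex _ c => c.isEL
  | all _ _ => False

/-- `ELU` concepts: additionally allow ⊔. -/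
def isELU : Concept Cn R → Prop
  | top => True
  | bot => False
  | name _ => True
  | neg _ => False
  | conj c d => c.isELU ∧ d.isELU
  | disj c d => c.isELU ∧ d.isELU
  | ex _ c => c.isELU
  | all _ _ => False

/-- `EL⊥` concepts. -/
def isELbot : Concept Cn R → Prop
  | top => True
  | bot => True
  | name _ => True
  | neg _ => False
  | conj c d => c.isELbot ∧ d.isELbot
  | disj _ _ => False
  | ex _ c => c.isELbot
  | all _ _ => False

/-- `ELU⊥` concepts. -/
def isELUbot : Concept Cn R → Prop
  | top => True
  | bot => True
  | name _ => True
  | neg _ => False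
  | conj c d => c.isELUbot ∧ d.isELUbot
  | disj c d => c.isELUbot ∧ d.isELUbot
  | ex _ c => c.isELUbot
  | all _ _ => False

/-- the nesting depth of ∃/∀ restrictions. -/
def depth : Concept Cn R → ℕ
  | top => 0
  | bot => 0
  | name _ => 0
  | neg c => c.depth
  | conj c d => max c.depth d.depth
  | disj c d => max c.depth d.depth
  | ex _ c => c.depth + 1
  | all _ c => c.depth + 1

/-- size of a concept (occurrences of symbols). -/
def size : Concept Cn R → ℕ
  | top => 1
  | bot => 1
  | name _ => 1
  | neg c => c.size + 1
  | conj c d => c.size + d.size + 1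
  | disj c d => c.size + d.size + 1
  | ex _ c => c.size + 2
  | all _ c => c.size + 2

/-- set of subconcepts. -/
def sub : Concept Cn R → Set (Concept Cn R)
  | top => {top}
  | bot => {bot}
  | name A => {name A}
  | neg c => insert (neg c) c.sub
  | conj c d => insert (conj c d) (c.sub ∪ d.sub)
  | disj c d => insert (disj c d) (c.sub ∪ d.sub)
  | ex r c => insert (ex r c) c.sub
  | all r c => insert (all r c) c.sub

/-- concept names occurring in a concept. -/
def names : Concept Cn R → Set Cn
  | top => ∅
  | bot => ∅
  | name A => {A}
  | neg c => c.names
  | conj c d => c.names ∪ d.names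
  | disj c d => c.names ∪ d.names
  | ex _ c => c.names
  | all _ c => c.names

/-- role names occurring in a concept. -/
def roles : Concept Cn R → Set R
  | top => ∅
  | bot => ∅
  | name _ => ∅
  | neg c => c.roles
  | conj c d => c.roles ∪ d.roles
  | disj c d => c.roles ∪ d.roles
  | ex r c => insert r c.roles
  | all r c => insert r c.roles

/-- top-level conjuncts of a concept. -/
def tlConj : Concept Cn R → Set (Concept Cn R)
  | conj c d => c.tlConj ∪ d.tlConj
  | c => {c}

end Concept

/-- n-fold nesting of ∃r applied to a concept. -/
def exN {Cn R : Type} (r : R) : ℕ → Concept Cn R → Concept Cn R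
  | 0, c => c
  | n + 1, c => Concept.ex r (exN r n c)

/-- An interpretation: a domain together with extensions of concept and role names. -/
structure Interp (Cn R : Type) : Type 1 where
  Dom : Type
  cI : Cn → Set Dom
  rI : R → Set (Dom × Dom)

/-- Semantics of concepts. -/
def Interp.interp {Cn R : Type} (I : Interp Cn R) : Concept Cn R → Set I.Dom
  | .top => Set.univ
  | .bot => ∅
  | .name A => I.cI A
  | .neg c => (I.interp c)ᶜ
  | .conj c d => I.interp c ∩ I.interp d
  | .disj c d => I.interp c ∪ I.interp d
  | .ex r c => {x | ∃ y, (x, y) ∈ I.rI r ∧ y ∈ I.interp c}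
  | .all r c => {x | ∀ y, (x, y) ∈ I.rI r → y ∈ I.interp c}

/-- An ontology: a set of concept inclusions `C ⊑ D`, coded as pairs `(C, D)`. -/
abbrev Ontology (Cn R : Type) := Set (Concept Cn R × Concept Cn R)

/-- `I` is a model of the ontology `O`. -/
def Interp.isModel {Cn R : Type} (I : Interp Cn R) (O : Ontology Cn R) : Prop :=
  ∀ ci ∈ O, I.interp ci.1 ⊆ I.interp ci.2

/-- `O ⊨ c ⊑ d`. -/
def entails {Cn R : Type} (O : Ontology Cn R) (c d : Concept Cn R) : Prop :=
  ∀ I : Interp Cn R, I.isModel O → I.interp c ⊆ I.interp d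

/-- logical equivalence (w.r.t. the empty ontology). -/
def lequiv {Cn R : Type} (c d : Concept Cn R) : Prop :=
  entails ∅ c d ∧ entails ∅ d c

/-- set of subconcepts of an ontology. -/
def subO {Cn R : Type} (O : Ontology Cn R) : Set (Concept Cn R) :=
  {F | ∃ ci ∈ O, F ∈ ci.1.sub ∪ ci.2.sub}

/-- concept names of an ontology. -/
def sigC {Cn R : Type} (O : Ontology Cn R) : Set Cn :=
  {A | ∃ ci ∈ O, A ∈ ci.1.names ∪ ci.2.names}

/-- role names of an ontology. -/
def sigR {Cn R : Type} (O : Ontology Cn R) : Set R :=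
  {r | ∃ ci ∈ O, r ∈ ci.1.roles ∪ ci.2.roles}


/- STATEMENT 8: for acyclic ELU ontologies, an entailed existential restriction not
   witnessed by an existential top-level conjunct is already entailed by one of the
   concept-name conjuncts. -/

/-- An ontology of inclusions `A ⊑ C` (flag `false`) and equivalences `A ≡ C`
    (flag `true`) whose left-hand sides are concept names; uniqueness of left-hand
    sides is built in. -/
structure NamedOnt (Cn R : Type) where
  defn : Cn → Option (Concept Cn R × Bool)

/-- dependency of defined concept names: `B` occurs in the definition of `A`. -/
def NamedOnt.dep {Cn R : Type} (O : NamedOnt Cn R) (A B : Cn) : Prop :=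
  ∃ p, O.defn A = some p ∧ B ∈ p.1.names

/-- acyclicity: no definitorial cycle. -/
def NamedOnt.acyclic {Cn R : Type} (O : NamedOnt Cn R) : Prop :=
  ∀ A : Cn, ¬ Relation.TransGen O.dep A A

/-- a model of a named ontology. -/
def Interp.isModelN {Cn R : Type} (I : Interp Cn R) (O : NamedOnt Cn R) : Prop :=
  ∀ (A : Cn) (c : Concept Cn R) (b : Bool), O.defn A = some (c, b) →
    I.interp (.name A) ⊆ I.interp c ∧ (b = true → I.interp c ⊆ I.interp (.name A))

/-- entailment w.r.t. a named ontology. -/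
def entailsN {Cn R : Type} (O : NamedOnt Cn R) (c d : Concept Cn R) : Prop :=
  ∀ I : Interp Cn R, I.isModelN O → I.interp c ⊆ I.interp d

/-- conjunction of a list of concepts. -/
def bigConj {Cn R : Type} (l : List (Concept Cn R)) : Concept Cn R :=
  l.foldr Concept.conj Concept.top

/- ===== auxiliary material for stmt8 ===== -/

theorem Concept.isEL_isELU {Cn R : Type} : ∀ {c : Concept Cn R}, c.isEL → c.isELU := by
  intro c
  induction c <;> simp_all [Concept.isEL, Concept.isELU]

theorem mem_bigConj {Cn R : Type} (I : Interp Cn R) (l : List (Concept Cn R)) (x : I.Dom) :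
    x ∈ I.interp (bigConj l) ↔ ∀ c ∈ l, x ∈ I.interp c := by
  induction l with
  | nil => simp [bigConj, Interp.interp]
  | cons c l ih =>
    simp only [bigConj, List.foldr_cons] at *
    show x ∈ I.interp c ∩ I.interp _ ↔ _
    constructor
    · rintro ⟨h1, h2⟩ e he
      rcases List.mem_cons.mp he with rfl | he
      · exact h1
      · exact ih.mp h2 e he
    · intro h
      exact ⟨h c List.mem_cons_self, ih.mpr fun e he => h e (List.mem_cons_of_mem _ he)⟩

/-- the full interpretation on a one-point domain. -/
def fullInterp (Cn R : Type) : Interp Cn R :=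
  ⟨PUnit, fun _ => Set.univ, fun _ => Set.univ⟩

theorem fullInterp_interp {Cn R : Type} :
    ∀ (c : Concept Cn R), c.isELU → ∀ x, x ∈ (fullInterp Cn R).interp c := by
  intro c
  induction c with
  | top => intro _ x; exact Set.mem_univ x
  | bot => intro hc; exact hc.elim
  | name A => intro _ x; exact Set.mem_univ x
  | neg c ih => intro hc; exact hc.elim
  | conj c d ihc ihd => intro hc x; exact ⟨ihc hc.1 x, ihd hc.2 x⟩
  | disj c d ihc ihd => intro hc x; exact Or.inl (ihc hc.1 x)
  | ex s c ih => intro hc x; exact ⟨x, Set.mem_univ _, ih hc x⟩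
  | all s c ih => intro hc; exact hc.elim

theorem fullInterp_isModelN {Cn R : Type} (O : NamedOnt Cn R)
    (hELU : ∀ (A : Cn) (p : Concept Cn R × Bool), O.defn A = some p → p.1.isELU) :
    (fullInterp Cn R).isModelN O := by
  intro A c b hdef
  exact ⟨fun x _ => fullInterp_interp c (hELU A (c, b) hdef) x,
    fun _ x _ => Set.mem_univ x⟩

theorem exists_fixpoint {α : Type} (base : α → Prop) (step : (α → Prop) → α → Prop)
    (hmono : ∀ X Y : α → Prop, (∀ a, X a → Y a) → ∀ a, step X a → step Y a) :
    ∃ X : α → Prop, ∀ a, X a ↔ base a ∨ step X a := by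
  let F : (α → Prop) →o (α → Prop) :=
    ⟨fun X a => base a ∨ step X a, fun X Y h a => Or.imp id (hmono X Y h a)⟩
  exact ⟨OrderHom.lfp F, fun a => Iff.of_eq (congrFun (OrderHom.map_lfp F).symm a)⟩

section SumConstruction

variable {Cn R : Type} {ι : Type} (M : ι → Interp Cn R) (d : ∀ i, (M i).Dom)
  (tree : ι → Prop) (dir : ι → R → Prop) (X : Cn → Prop)

/-- merge the models `M i` at a common fresh root. -/
def sumInterp : Interp Cn R where
  Dom := Option (Σ i, (M i).Dom)
  cI := fun A x =>
    match x with
    | none => X A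
    | some ⟨i, u⟩ => u ∈ (M i).cI A
  rI := fun s =>
    {q | (∃ i u v, q.1 = some ⟨i, u⟩ ∧ q.2 = some ⟨i, v⟩ ∧ (u, v) ∈ (M i).rI s)
      ∨ (q.1 = none ∧ ∃ i v, q.2 = some ⟨i, v⟩ ∧ tree i ∧ (d i, v) ∈ (M i).rI s)
      ∨ (q.1 = none ∧ ∃ i, q.2 = some ⟨i, d i⟩ ∧ dir i s)}

/-- ELU concepts are preserved between a component and the merged model. -/
theorem sumInterp_pres :
    ∀ (c : Concept Cn R), c.isELU → ∀ (i : ι) (u : (M i).Dom),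
      (some ⟨i, u⟩ ∈ (sumInterp M d tree dir X).interp c ↔ u ∈ (M i).interp c) := by
  intro c
  induction c with
  | top => intro _ i u; simp [Interp.interp]; exact trivial
  | bot => intro hc; exact hc.elim
  | name A => intro _ i u; exact Iff.rfl
  | neg c ih => intro hc; exact hc.elim
  | conj c e ihc ihe =>
    intro hc i u
    exact and_congr (ihc hc.1 i u) (ihe hc.2 i u)
  | disj c e ihc ihe =>
    intro hc i u
    exact or_congr (ihc hc.1 i u) (ihe hc.2 i u)
  | all s c ih => intro hc; exact hc.elim
  | ex s c ih =>
    intro hc i u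
    constructor
    · rintro ⟨y, hy, hyc⟩
      rcases hy with ⟨i', u', v, h1, h2, h3⟩ | ⟨h1, _⟩ | ⟨h1, _⟩
      · obtain ⟨h1a, h1b⟩ := Sigma.mk.inj_iff.mp (Option.some_inj.mp h1)
        subst h1a
        cases eq_of_heq h1b
        subst h2
        exact ⟨v, h3, (ih hc _ v).mp hyc⟩
      · exact absurd h1 (by simp)
      · exact absurd h1 (by simp)
    · rintro ⟨v, hv, hvc⟩
      exact ⟨some ⟨i, v⟩, Or.inl ⟨i, u, v, rfl, rfl, hv⟩, (ih hc i v).mpr hvc⟩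

/-- monotonicity of ELU interpretation in the root labelling. -/
theorem sumInterp_mono {X Y : Cn → Prop} (hXY : ∀ A, X A → Y A) :
    ∀ (c : Concept Cn R), c.isELU → ∀ x,
      x ∈ (sumInterp M d tree dir X).interp c → x ∈ (sumInterp M d tree dir Y).interp c := by
  intro c
  induction c with
  | top => intro _ x h; exact h
  | bot => intro hc; exact hc.elim
  | name A =>
    intro _ x h
    match x with
    | none => exact hXY A h
    | some ⟨i, u⟩ => exact h
  | neg c ih => intro hc; exact hc.elim
  | conj c e ihc ihe => intro hc x h; exact ⟨ihc hc.1 x h.1, ihe hc.2 x h.2⟩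
  | disj c e ihc ihe =>
    intro hc x h
    exact h.imp (ihc hc.1 x) (ihe hc.2 x)
  | all s c ih => intro hc; exact hc.elim
  | ex s c ih =>
    rintro hc x ⟨y, hy, hyc⟩
    exact ⟨y, hy, ih hc y hyc⟩

/-- transfer of ELU satisfaction from a distinguished point of a tree component
    to the root of the merged model. -/
theorem sumInterp_transfer {i : ι} (hti : tree i)
    (hXb : ∀ B, d i ∈ (M i).cI B → X B) :
    ∀ (c : Concept Cn R), c.isELU → d i ∈ (M i).interp c →
      none ∈ (sumInterp M d tree dir X).interp c := by
  intro c
  induction c with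
  | top => intro _ _; trivial
  | bot => intro hc; exact hc.elim
  | name A => intro _ h; exact hXb A h
  | neg c ih => intro hc; exact hc.elim
  | conj c e ihc ihe => intro hc h; exact ⟨ihc hc.1 h.1, ihe hc.2 h.2⟩
  | disj c e ihc ihe => intro hc h; exact h.imp (ihc hc.1) (ihe hc.2)
  | all s c ih => intro hc; exact hc.elim
  | ex s c ih =>
    rintro hc ⟨v, hv, hvc⟩
    exact ⟨some ⟨i, v⟩, Or.inr (Or.inl ⟨rfl, i, v, rfl, hti, hv⟩),
      (sumInterp_pres M d tree dir X c hc i v).mpr hvc⟩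

end SumConstruction

theorem stmt8 {Cn R : Type} (O : NamedOnt Cn R)
    (hELU : ∀ (A : Cn) (p : Concept Cn R × Bool), O.defn A = some p → p.1.isELU)
    (hacyc : O.acyclic)
    (As : List Cn) (Es : List (R × Concept Cn R))
    (hEs : ∀ p ∈ Es, (p.2).isEL)
    (r : R) (E : Concept Cn R) (hE : E.isEL)
    (hent : entailsN O
      (bigConj (As.map Concept.name ++ Es.map fun p => Concept.ex p.1 p.2))
      (.ex r E))
    (hno : ∀ p ∈ Es, p.1 = r → ¬ entailsN O p.2 E) :
    ∃ A ∈ As, entailsN O (.name A) (.ex r E) := by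
  classical
  by_contra hcon
  push_neg at hcon
  -- countermodels for the concept names in As
  have h1 : ∀ a : {A // A ∈ As}, ∃ I : Interp Cn R, I.isModelN O ∧
      ∃ x, x ∈ I.interp (.name a.1) ∧ x ∉ I.interp (.ex r E) := by
    rintro ⟨A, hA⟩
    have h := hcon A hA
    unfold entailsN at h
    push_neg at h
    obtain ⟨I, hI, hns⟩ := h
    obtain ⟨x, hx1, hx2⟩ := Set.not_subset.mp hns
    exact ⟨I, hI, x, hx1, hx2⟩
  -- models realizing the existential conjuncts, avoiding E on role r
  have h2 : ∀ p : {q // q ∈ Es}, ∃ I : Interp Cn R, I.isModelN O ∧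
      ∃ x, x ∈ I.interp p.1.2 ∧ (p.1.1 = r → x ∉ I.interp E) := by
    rintro ⟨p, hp⟩
    by_cases hr : p.1 = r
    · have h := hno p hp hr
      unfold entailsN at h
      push_neg at h
      obtain ⟨I, hI, hns⟩ := h
      obtain ⟨x, hx1, hx2⟩ := Set.not_subset.mp hns
      exact ⟨I, hI, x, hx1, fun _ => hx2⟩
    · exact ⟨fullInterp Cn R, fullInterp_isModelN O hELU,
        PUnit.unit, fullInterp_interp p.2 (Concept.isEL_isELU (hEs p hp)) _,
        fun h => absurd h hr⟩
  choose IA hIAmod xA hxA1 hxA2 using h1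
  choose IE hIEmod xE hxE1 hxE2 using h2
  -- the merged model's components
  let ι : Type := {A // A ∈ As} ⊕ {q // q ∈ Es}
  let M : ι → Interp Cn R := fun i =>
    match i with
    | .inl a => IA a
    | .inr p => IE p
  let d : ∀ i : ι, (M i).Dom := fun i =>
    match i with
    | .inl a => xA a
    | .inr p => xE p
  let tree : ι → Prop := fun i =>
    match i with
    | .inl _ => True
    | .inr _ => False
  let dir : ι → R → Prop := fun i s =>
    match i with
    | .inl _ => False
    | .inr p => p.1.1 = s
  have hMmod : ∀ i : ι, (M i).isModelN O := by
    rintro (a | p)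
    · exact hIAmod a
    · exact hIEmod p
  -- the root labelling: least fixed point
  let base : Cn → Prop := fun B => ∃ a, xA a ∈ (IA a).cI B
  obtain ⟨X, hXfix⟩ := exists_fixpoint base
    (fun X A => ∃ c, O.defn A = some (c, true) ∧
      none ∈ (sumInterp M d tree dir X).interp c)
    (by
      rintro X Y hXY A ⟨c, hdef, hc⟩
      exact ⟨c, hdef, sumInterp_mono M d tree dir hXY c (hELU A (c, true) hdef) none hc⟩)
  have hbase : ∀ B, base B → X B := fun B h => (hXfix B).mpr (Or.inl h)
  have hXb : ∀ (a : {A // A ∈ As}) (B : Cn), d (Sum.inl a) ∈ (M (Sum.inl a)).cI B → X B :=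
    fun a B h => hbase B ⟨a, h⟩
  -- the merged interpretation is a model of O
  have hmodel : (sumInterp M d tree dir X).isModelN O := by
    intro A c b hdef
    have hcELU : c.isELU := hELU A (c, b) hdef
    constructor
    · intro x hx
      match x with
      | some ⟨i, u⟩ =>
        have hu : u ∈ (M i).cI A := hx
        have := (hMmod i A c b hdef).1 hu
        exact (sumInterp_pres M d tree dir X c hcELU i u).mpr this
      | none =>
        have hXA : X A := hx
        rcases (hXfix A).mp hXA with ⟨a, ha⟩ | ⟨c', hdef', hc'⟩
        · have h1 : d (Sum.inl a) ∈ (M (Sum.inl a)).interp c :=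
            (hMmod (Sum.inl a) A c b hdef).1 ha
          exact sumInterp_transfer M d tree dir X (i := Sum.inl a) True.intro (hXb a) c hcELU h1
        · rw [hdef] at hdef'
          injection hdef' with h
          injection h with h1 h2
          subst h1
          exact hc'
    · intro hb x hx
      subst hb
      match x with
      | some ⟨i, u⟩ =>
        have := (hMmod i A c true hdef).2 rfl
          ((sumInterp_pres M d tree dir X c hcELU i u).mp hx)
        exact this
      | none =>
        exact (hXfix A).mpr (Or.inr ⟨c, hdef, hx⟩)
  -- the root satisfies the big conjunction
  have hroot : none ∈ (sumInterp M d tree dir X).interp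
      (bigConj (As.map Concept.name ++ Es.map fun p => Concept.ex p.1 p.2)) := by
    refine (mem_bigConj _ _ _).mpr ?_
    intro c hc
    rcases List.mem_append.mp hc with hc | hc
    · obtain ⟨A, hA, rfl⟩ := List.mem_map.mp hc
      exact hbase A ⟨⟨A, hA⟩, hxA1 ⟨A, hA⟩⟩
    · obtain ⟨p, hp, rfl⟩ := List.mem_map.mp hc
      refine ⟨some ⟨Sum.inr ⟨p, hp⟩, xE ⟨p, hp⟩⟩,
        Or.inr (Or.inr ⟨rfl, Sum.inr ⟨p, hp⟩, rfl, rfl⟩), ?_⟩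
      exact (sumInterp_pres M d tree dir X p.2
        (Concept.isEL_isELU (hEs p hp)) _ _).mpr (hxE1 ⟨p, hp⟩)
  -- apply the entailment and derive a contradiction
  have hex : none ∈ (sumInterp M d tree dir X).interp (.ex r E) :=
    hent _ hmodel hroot
  obtain ⟨y, hy, hyE⟩ := hex
  have hEU : E.isELU := Concept.isEL_isELU hE
  rcases hy with ⟨i, u, v, h1, -, -⟩ | ⟨-, i, v, rfl, hti, hdv⟩ | ⟨-, i, rfl, hdir⟩
  · exact absurd h1 (by simp)
  · cases i with
    | inl a =>
      have hvE : v ∈ (M (Sum.inl a)).interp E :=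
        (sumInterp_pres M d tree dir X E hEU (Sum.inl a) v).mp hyE
      exact hxA2 a ⟨v, hdv, hvE⟩
    | inr p => exact hti.elim
  · cases i with
    | inl a => exact hdir.elim
    | inr p =>
      have hvE : xE p ∈ (M (Sum.inr p)).interp E :=
        (sumInterp_pres M d tree dir X E hEU _ _).mp hyE
      exact hxE2 p hdir hvE
end DL
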